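/- Let C and D be categories, T : C ⥤ D and S : D ⥤ C functors with S left adjoint to T, with unit η : 𝟭_D ⟶ S ⋙ T and counit ε : T ⋙ S ⟶ 𝟭_C. Let F : C ⥤ Set and G : D ⥤ Set be functors and θ : F ≅ T ⋙ G a natural isomorphism. Define σ : G ⟶ S ⋙ F by σ_Y = (θ_{S Y})⁻¹ ∘ G(η_Y). For a set-valued functor P on a category E, let D_{ΔP} denote the preorder whose elements are triples (X, x₀, x₁) with x₀, x₁ ∈ P X, and (X, x₀, x₁) ≤ (Y, y₀, y₁) iff there exists f : X ⟶ Y with P(f)(x₀) = y₀ and P(f)(x₁) = y₁. Define aut(T) : D_{ΔF} → D_{ΔG} by (X, x₀, x₁) ↦ (T X, θ_X(x₀), θ_X(x₁)) and aut(S) : D_{ΔG} → D_{ΔF} by (Y, y₀, y₁) ↦ (S Y, σ_Y(y₀), σ_Y(y₁)). Then aut(T) and aut(S) are monotone, and aut(S) is left adjoint to aut(T): for all d ∈ D_{ΔG} and c ∈ D_{ΔF}, aut(S)(d) ≤ c if and only if d ≤ aut(T)(c). -/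

import Mathlib

open CategoryTheory

universe u v w

/-- The diagram `D_{ΔP}` of a set-valued functor `P`: triples `(X, x₀, x₁)`
with `x₀, x₁ ∈ P X`. -/
def DDelta {E : Type u} [Category.{v} E] (P : E ⥤ Type w) : Type (max u w) :=
  Σ X : E, P.obj X × P.obj X

/-- The preorder on `D_{ΔP}`: `(X, x₀, x₁) ≤ (Y, y₀, y₁)` iff there is
`f : X ⟶ Y` with `P(f)(x₀) = y₀` and `P(f)(x₁) = y₁`. -/
def DDelta.le {E : Type u} [Category.{v} E] {P : E ⥤ Type w}
    (d e : DDelta P) : Prop :=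
  ∃ f : d.1 ⟶ e.1, P.map f d.2.1 = e.2.1 ∧ P.map f d.2.2 = e.2.2

/-- Given an adjunction `S ⊣ T`, functors `F : C ⥤ Set`, `G : D ⥤ Set` and a
natural isomorphism `θ : F ≅ T ⋙ G`, the induced maps
`aut(T) : D_{ΔF} → D_{ΔG}` and `aut(S) : D_{ΔG} → D_{ΔF}` are monotone and
`aut(S)` is left adjoint (a Galois connection) to `aut(T)`. -/
theorem stmt3 {C : Type u} [Category.{v} C] {D : Type u} [Category.{v} D]
    (T : C ⥤ D) (S : D ⥤ C) (adj : S ⊣ T)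
    (F : C ⥤ Type w) (G : D ⥤ Type w) (θ : F ≅ T ⋙ G)
    (σ : ∀ Y : D, G.obj Y → F.obj (S.obj Y))
    (hσ : ∀ (Y : D) (y : G.obj Y),
      σ Y y = θ.inv.app (S.obj Y) (G.map (adj.unit.app Y) y))
    (autT : DDelta F → DDelta G)
    (hautT : ∀ d : DDelta F,
      autT d = ⟨T.obj d.1, (θ.hom.app d.1 d.2.1, θ.hom.app d.1 d.2.2)⟩)
    (autS : DDelta G → DDelta F)
    (hautS : ∀ e : DDelta G,
      autS e = ⟨S.obj e.1, (σ e.1 e.2.1, σ e.1 e.2.2)⟩) :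
    -- `aut(T)` and `aut(S)` are monotone
    (∀ d e : DDelta F, DDelta.le d e → DDelta.le (autT d) (autT e)) ∧
    (∀ d e : DDelta G, DDelta.le d e → DDelta.le (autS d) (autS e)) ∧
    -- `aut(S)` is left adjoint to `aut(T)`
    (∀ (d : DDelta G) (c : DDelta F),
      DDelta.le (autS d) c ↔ DDelta.le d (autT c)) := by
  have hT : autT = fun d => ⟨T.obj d.1, (θ.hom.app d.1 d.2.1, θ.hom.app d.1 d.2.2)⟩ :=
    funext hautT
  have hS : autS = fun e => ⟨S.obj e.1, (σ e.1 e.2.1, σ e.1 e.2.2)⟩ := funext hautS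
  subst hT hS
  have nat : ∀ {X Y : C} (f : X ⟶ Y) (x : F.obj X),
      G.map (T.map f) (θ.hom.app X x) = θ.hom.app Y (F.map f x) := by
    intro X Y f x
    exact (types_congr_hom (θ.hom.naturality f) x).symm
  have natinv : ∀ {X Y : C} (f : X ⟶ Y) (z : G.obj (T.obj X)),
      F.map f (θ.inv.app X z) = θ.inv.app Y (G.map (T.map f) z) := by
    intro X Y f z
    exact (types_congr_hom (θ.inv.naturality f) z).symm
  have key : ∀ {Y Y' : D} (g : Y ⟶ Y') (y : G.obj Y),
      F.map (S.map g) (σ Y y) = σ Y' (G.map g y) := by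
    intro Y Y' g y
    have h : adj.unit.app Y ≫ T.map (S.map g) = g ≫ adj.unit.app Y' := by
      simpa using (adj.unit.naturality g).symm
    rw [hσ, hσ, natinv, ← FunctorToTypes.map_comp_apply,
      ← FunctorToTypes.map_comp_apply, h]
  have hoinv : ∀ {X : C} (x : F.obj X), θ.inv.app X (θ.hom.app X x) = x := by
    intro X x
    have := types_congr_hom (θ.hom_inv_id_app X) x
    simpa using this
  have invho : ∀ {X : C} (z : G.obj (T.obj X)), θ.hom.app X (θ.inv.app X z) = z := by
    intro X z
    have := types_congr_hom (θ.inv_hom_id_app X) z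
    simpa using this
  refine ⟨?_, ?_, ?_⟩
  · rintro ⟨X, x0, x1⟩ ⟨Y, y0, y1⟩ ⟨f, h0, h1⟩
    dsimp only at h0 h1
    exact ⟨T.map f, by dsimp only; rw [nat, h0], by dsimp only; rw [nat, h1]⟩
  · rintro ⟨Y, y0, y1⟩ ⟨Y', y0', y1'⟩ ⟨g, h0, h1⟩
    dsimp only at h0 h1
    exact ⟨S.map g, by dsimp only; rw [key, h0], by dsimp only; rw [key, h1]⟩
  · rintro ⟨Y, y0, y1⟩ ⟨X, x0, x1⟩
    constructor
    · rintro ⟨f, h0, h1⟩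
      dsimp only at f h0 h1
      refine ⟨adj.unit.app Y ≫ T.map f, ?_, ?_⟩
      · dsimp only
        rw [FunctorToTypes.map_comp_apply, ← h0, hσ, ← nat, invho]
      · dsimp only
        rw [FunctorToTypes.map_comp_apply, ← h1, hσ, ← nat, invho]
    · rintro ⟨g, h0, h1⟩
      dsimp only at g h0 h1
      have tri : ∀ z : G.obj (T.obj X),
          G.map (T.map (adj.counit.app X)) (G.map (adj.unit.app (T.obj X)) z) = z := by
        intro z
        rw [← FunctorToTypes.map_comp_apply, adj.right_triangle_components,
          ]
        exact types_congr_hom (G.map_id (T.obj X)) z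
      refine ⟨S.map g ≫ adj.counit.app X, ?_, ?_⟩
      · dsimp only
        rw [FunctorToTypes.map_comp_apply, key, h0, hσ, natinv, tri, hoinv]
      · dsimp only
        rw [FunctorToTypes.map_comp_apply, key, h1, hσ, natinv, tri, hoinv]
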